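/- Let R be a commutative ring with unit element, let R' be the subring of R generated by 1, and suppose n := s(R) < ∞, i.e., there exists a polynomial p ∈ R[x] with deg p < n representing x ↦ x^n on R. Then s(R'; R) ≤ lcm(Λ) + Λ, where Λ := (n!)^{(2n)^n · n} and lcm(Λ) denotes the least common multiple of the numbers 1, 2, …, Λ. Concretely, u^{lcm(Λ)+Λ} = u^Λ holds for all u ∈ R, so the monomial x^{lcm(Λ)+Λ} is represented on R by a polynomial with coefficients in R' of strictly smaller degree. -/

import Mathlib

open Polynomial Finset

namespace Stmt6Aux

variable {R : Type*} [CommRing R]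

lemma diff_step (q : R[X]) {d : ℕ} (hd : 1 ≤ d) (h : q.natDegree ≤ d) :
    ((Polynomial.taylor 1 q : R[X]) - q).natDegree ≤ d - 1 ∧
      ((Polynomial.taylor 1 q : R[X]) - q).coeff (d - 1) = (d : R) * q.coeff d := by
  have hcoeffd : ((Polynomial.taylor 1 q : R[X]) - q).coeff d = 0 := by
    rw [Polynomial.coeff_sub, Polynomial.taylor_coeff]
    have h0 : (Polynomial.hasseDeriv d q).natDegree < 1 :=
      lt_of_le_of_lt (le_trans (Polynomial.natDegree_hasseDeriv_le q d) (by omega)) one_pos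
    rw [Polynomial.eval_eq_sum_range' h0]
    simp [Polynomial.hasseDeriv_coeff]
  constructor
  · rw [Polynomial.natDegree_le_iff_coeff_eq_zero]
    intro N hN
    rcases eq_or_lt_of_le (show d ≤ N by omega) with hdN | hdN
    · rw [← hdN]; exact hcoeffd
    · rw [Polynomial.coeff_sub]
      have h1 : (Polynomial.taylor 1 q : R[X]).natDegree < N := by
        rw [Polynomial.natDegree_taylor]; omega
      rw [Polynomial.coeff_eq_zero_of_natDegree_lt h1,
        Polynomial.coeff_eq_zero_of_natDegree_lt (by omega), sub_zero]
  · rw [Polynomial.coeff_sub, Polynomial.taylor_coeff]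
    have h1 : (Polynomial.hasseDeriv (d - 1) q).natDegree < 2 := by
      have := Polynomial.natDegree_hasseDeriv_le q (d - 1)
      omega
    rw [Polynomial.eval_eq_sum_range' h1]
    have hc0 : (Polynomial.hasseDeriv (d - 1) q).coeff 0 = q.coeff (d - 1) := by
      simp [Polynomial.hasseDeriv_coeff]
    have hc1 : (Polynomial.hasseDeriv (d - 1) q).coeff 1 = (d : R) * q.coeff d := by
      rw [Polynomial.hasseDeriv_coeff]
      have h2 : 1 + (d - 1) = d := by omega
      rw [h2]
      have h3 : d.choose (d - 1) = d := by
        have h4 := Nat.choose_symm (show 1 ≤ d from hd) (n := d)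
        rw [Nat.choose_one_right] at h4
        omega
      rw [h3]
    rw [Finset.sum_range_succ, Finset.sum_range_one, hc0, hc1]
    ring

lemma cast_factorial_eq_zero (n : ℕ) (q : R[X]) (hdeg : q.natDegree ≤ n)
    (hlead : q.coeff n = 1) (hvan : ∀ x : R, q.eval x = 0) : (n.factorial : R) = 0 := by
  set D : R[X] → R[X] := fun r => (Polynomial.taylor 1 r : R[X]) - r with hD
  have key : ∀ j, j ≤ n → (D^[j] q).natDegree ≤ n - j ∧
      (D^[j] q).coeff (n - j) = (n.descFactorial j : R) ∧ (∀ x : R, (D^[j] q).eval x = 0) := by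
    intro j
    induction j with
    | zero => intro _; simpa [hlead] using ⟨hdeg, hvan⟩
    | succ j ihj =>
      intro hj
      obtain ⟨h1, h2, h3⟩ := ihj (by omega)
      rw [Function.iterate_succ_apply']
      have hd1 : 1 ≤ n - j := by omega
      obtain ⟨g1, g2⟩ := diff_step (D^[j] q) hd1 h1
      have hnj : n - j - 1 = n - (j + 1) := by omega
      refine ⟨?_, ?_, ?_⟩
      · rw [hD]; rw [hnj] at g1; exact g1
      · rw [hD, ← hnj, g2, h2, Nat.descFactorial_succ]
        push_cast
        ring
      · intro x
        show Polynomial.eval x ((Polynomial.taylor 1 (D^[j] q) : R[X]) - D^[j] q) = 0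
        simp only [Polynomial.eval_sub, Polynomial.taylor_eval, h3, sub_zero]
  obtain ⟨-, h2, h3⟩ := key n le_rfl
  have h4 := h3 0
  rw [← Polynomial.coeff_zero_eq_eval_zero] at h4
  rw [Nat.sub_self] at h2
  rw [Nat.descFactorial_self] at h2
  rw [← h2, h4]

lemma prod_pow_update (a : ℕ → R) (e : ℕ → ℕ) {n i : ℕ} (hi : i ∈ Finset.range n) (c : ℕ) :
    ∏ j ∈ Finset.range n, a j ^ (Function.update e i c j)
      = a i ^ c * ∏ j ∈ (Finset.range n).erase i, a j ^ e j := by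
  have h : ∀ j ∈ Finset.range n,
      a j ^ (Function.update e i c j) = Function.update (fun j => a j ^ e j) i (a i ^ c) j := by
    intro j _
    by_cases hji : j = i
    · subst hji; simp
    · simp [Function.update_of_ne hji]
  rw [Finset.prod_congr rfl h, Finset.prod_update_of_mem hi, Finset.sdiff_singleton_eq_erase]

lemma prod_pow_bump (a : ℕ → R) (g : ℕ → ℕ) {n m : ℕ} (hm : m ∈ Finset.range n) :
    ∏ j ∈ Finset.range n, a j ^ (g j + if j = m then 1 else 0)
      = a m * ∏ j ∈ Finset.range n, a j ^ g j := by
  have h : ∀ j ∈ Finset.range n,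
      a j ^ (g j + if j = m then 1 else 0) = a j ^ g j * (if j = m then a j else 1) := by
    intro j _
    by_cases hj : j = m
    · simp [hj, pow_succ]
    · simp [hj]
  rw [Finset.prod_congr rfl h, Finset.prod_mul_distrib,
    Finset.prod_ite_eq' (Finset.range n) m (fun j => a j), if_pos hm]
  ring

lemma sum_bump (g : ℕ → ℕ) {n m : ℕ} (hm : m ∈ Finset.range n) :
    ∑ j ∈ Finset.range n, (g j + if j = m then 1 else 0)
      = (∑ j ∈ Finset.range n, g j) + 1 := by
  rw [Finset.sum_add_distrib, Finset.sum_ite_eq' (Finset.range n) m (fun _ => 1), if_pos hm]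

lemma key_mono (n : ℕ) (hn : 1 ≤ n) (a : ℕ → R) (u : R)
    (hu : u ^ n = ∑ m ∈ Finset.range n, a m * u ^ m)
    (ha : ∀ i : ℕ, a i ^ (2 * n) = ∑ m ∈ Finset.range n, a m * a i ^ (2 * m))
    (M : AddSubmonoid R)
    (hbase : ∀ (e : ℕ → ℕ) (f : ℕ), (∀ i ∈ Finset.range n, e i < 2 * n) → f < n →
      (∏ i ∈ Finset.range n, a i ^ e i) * u ^ f ∈ M) :
    ∀ (t f : ℕ) (e : ℕ → ℕ), (∑ i ∈ Finset.range n, e i) + f ≤ t →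
      (∏ i ∈ Finset.range n, a i ^ e i) * u ^ f ∈ M := by
  intro t
  induction t using Nat.strong_induction_on with
  | _ t iht =>
  intro f
  induction f using Nat.strong_induction_on with
  | _ f ihf =>
  intro e he
  by_cases h1 : ∃ i ∈ Finset.range n, 2 * n ≤ e i
  · obtain ⟨i, hi, hei⟩ := h1
    have hsum_i : e i ≤ ∑ j ∈ Finset.range n, e j :=
      Finset.single_le_sum (fun j _ => Nat.zero_le _) hi
    have hmono : (∏ j ∈ Finset.range n, a j ^ e j) * u ^ f
        = ∑ m ∈ Finset.range n,
          (∏ j ∈ Finset.range n,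
            a j ^ (Function.update e i (e i - 2 * n + 2 * m) j + if j = m then 1 else 0)) * u ^ f := by
      rw [← Finset.sum_mul]
      congr 1
      have hsplit : (∏ j ∈ Finset.range n, a j ^ e j)
          = a i ^ (2 * n) * (a i ^ (e i - 2 * n) * ∏ j ∈ (Finset.range n).erase i, a j ^ e j) := by
        rw [← Finset.mul_prod_erase _ _ hi, ← mul_assoc, ← pow_add]
        have : 2 * n + (e i - 2 * n) = e i := by omega
        rw [this]
      rw [hsplit, ha i, Finset.sum_mul]
      refine Finset.sum_congr rfl fun m hm => ?_
      rw [prod_pow_bump a _ hm, prod_pow_update a e hi]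
      ring
    rw [hmono]
    refine AddSubmonoid.sum_mem M fun m hm => ?_
    have hm' := Finset.mem_range.mp hm
    have hS1 : ∑ j ∈ Finset.range n, Function.update e i (e i - 2 * n + 2 * m) j
        = (e i - 2 * n + 2 * m) + ∑ j ∈ (Finset.range n).erase i, e j := by
      rw [Finset.sum_update_of_mem hi, Finset.sdiff_singleton_eq_erase]
    have hS2 : e i + ∑ j ∈ (Finset.range n).erase i, e j = ∑ j ∈ Finset.range n, e j :=
      Finset.add_sum_erase _ _ hi
    have hS3 := sum_bump (Function.update e i (e i - 2 * n + 2 * m)) hm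
    exact iht (t - 1) (by omega) f _ (by omega)
  · push_neg at h1
    by_cases h2 : n ≤ f
    · have hmono : (∏ j ∈ Finset.range n, a j ^ e j) * u ^ f
          = ∑ m ∈ Finset.range n,
            (∏ j ∈ Finset.range n, a j ^ (e j + if j = m then 1 else 0)) * u ^ (f - n + m) := by
        have hf : u ^ f = u ^ n * u ^ (f - n) := by
          rw [← pow_add]
          congr 1
          omega
        rw [hf, hu, Finset.sum_mul, Finset.mul_sum]
        refine Finset.sum_congr rfl fun m hm => ?_
        rw [prod_pow_bump a e hm]
        ring
      rw [hmono]
      refine AddSubmonoid.sum_mem M fun m hm => ?_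
      have hm' := Finset.mem_range.mp hm
      have hS3 := sum_bump e hm
      by_cases hmn : m + 1 < n
      · exact iht (t - 1) (by omega) (f - n + m) _ (by omega)
      · exact ihf (f - n + m) (by omega) _ (by omega)
    · push_neg at h2
      exact hbase e f h1 h2

lemma part1 {R : Type*} [CommRing R] {n : ℕ} (hn : 1 ≤ n) (p : Polynomial R)
    (hdeg : p.degree < (n : WithBot ℕ)) (hp : ∀ x : R, p.eval x = x ^ n) (u : R) :
    u ^ ((Finset.Icc 1 (n.factorial ^ ((2 * n) ^ n * n))).lcm id + n.factorial ^ ((2 * n) ^ n * n))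
      = u ^ (n.factorial ^ ((2 * n) ^ n * n)) := by
  classical
  set Λ := n.factorial ^ ((2 * n) ^ n * n) with hΛ
  set L := (Finset.Icc 1 Λ).lcm id with hLdef
  have hpnd : p.natDegree < n := by
    rcases eq_or_ne p 0 with rfl | hp0
    · simp; omega
    · exact (Polynomial.natDegree_lt_iff_degree_lt hp0).mpr hdeg
  have hq : ∀ x : R, x ^ n = ∑ m ∈ Finset.range n, p.coeff m * x ^ m := by
    intro x
    rw [← hp x, Polynomial.eval_eq_sum_range' hpnd]
  have hchar : (n.factorial : R) = 0 := by
    apply cast_factorial_eq_zero n (Polynomial.X ^ n - p)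
    · rw [Polynomial.natDegree_le_iff_coeff_eq_zero]
      intro N hN
      rw [Polynomial.coeff_sub, Polynomial.coeff_X_pow, if_neg (by omega),
        Polynomial.coeff_eq_zero_of_degree_lt (lt_of_lt_of_le hdeg (by exact_mod_cast (by omega : n ≤ N))),
        sub_zero]
    · rw [Polynomial.coeff_sub, Polynomial.coeff_X_pow, if_pos rfl,
        Polynomial.coeff_eq_zero_of_degree_lt hdeg, sub_zero]
    · intro x
      simp [hp x]
  set a : ℕ → R := fun m => p.coeff m with hadef
  let ι := (Fin n → Fin (2 * n)) × Fin n
  let w : ι → R := fun c => (∏ i : Fin n, a (i : ℕ) ^ ((c.1 i : ℕ))) * u ^ ((c.2 : ℕ))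
  set M := AddSubmonoid.closure (Set.range w) with hM
  have hbase : ∀ (e : ℕ → ℕ) (f : ℕ), (∀ i ∈ Finset.range n, e i < 2 * n) → f < n →
      (∏ i ∈ Finset.range n, a i ^ e i) * u ^ f ∈ M := by
    intro e f h1 h2
    apply AddSubmonoid.subset_closure
    refine ⟨⟨fun i => ⟨e i, h1 i (Finset.mem_range.mpr i.isLt)⟩, ⟨f, h2⟩⟩, ?_⟩
    show (∏ i : Fin n, a (i : ℕ) ^ (e (i : ℕ))) * u ^ f = _
    rw [Fin.prod_univ_eq_prod_range (fun k => a k ^ e k) n]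
  have hu' : u ^ n = ∑ m ∈ Finset.range n, a m * u ^ m := hq u
  have ha' : ∀ i : ℕ, a i ^ (2 * n) = ∑ m ∈ Finset.range n, a m * a i ^ (2 * m) := by
    intro i
    calc a i ^ (2 * n) = (a i ^ 2) ^ n := by rw [← pow_mul]
    _ = ∑ m ∈ Finset.range n, a m * (a i ^ 2) ^ m := hq (a i ^ 2)
    _ = ∑ m ∈ Finset.range n, a m * a i ^ (2 * m) := by
        refine Finset.sum_congr rfl fun m _ => ?_
        rw [← pow_mul]
  have hpowM : ∀ k : ℕ, u ^ k ∈ M := by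
    intro k
    have h0 : (∏ i ∈ Finset.range n, a i ^ ((fun _ => 0) i)) * u ^ k ∈ M :=
      key_mono n hn a u hu' ha' M hbase k k (fun _ => 0) (by simp)
    simpa using h0
  have hrep : ∀ x ∈ M, ∃ c : ι → ℕ, x = ∑ i : ι, c i • w i := by
    intro x hx
    refine AddSubmonoid.closure_induction ?_ ?_ ?_ hx
    · rintro _ ⟨j, rfl⟩
      refine ⟨fun i => if i = j then 1 else 0, ?_⟩
      simp [ite_smul, Finset.sum_ite_eq', Finset.sum_ite_eq]
      rw [Finset.sum_eq_single_of_mem j (Finset.mem_univ _) (fun b _ hb => if_neg hb), if_pos rfl]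
    · exact ⟨fun _ => 0, by simp⟩
    · rintro x y - - ⟨c, rfl⟩ ⟨c', rfl⟩
      exact ⟨c + c', by simp [add_smul, Finset.sum_add_distrib]⟩
  have hsmul : ∀ (c : ℕ) (x : R), c • x = (c % n.factorial) • x := by
    intro c x
    conv_lhs => rw [← Nat.mod_add_div c n.factorial]
    rw [add_smul, mul_smul]
    have h0 : (n.factorial : ℕ) • ((c / n.factorial) • x) = 0 := by
      rw [nsmul_eq_mul, hchar, zero_mul]
    rw [h0, add_zero]
  let g : (ι → Fin n.factorial) → R := fun c => ∑ i : ι, ((c i : ℕ)) • w i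
  set F : Finset R := Finset.image g Finset.univ with hF
  have hmemF : ∀ k : ℕ, u ^ k ∈ F := by
    intro k
    obtain ⟨c, hc⟩ := hrep _ (hpowM k)
    refine Finset.mem_image.mpr
      ⟨fun i => ⟨c i % n.factorial, Nat.mod_lt _ (Nat.factorial_pos n)⟩, Finset.mem_univ _, ?_⟩
    calc g (fun i => ⟨c i % n.factorial, Nat.mod_lt _ (Nat.factorial_pos n)⟩)
        = ∑ i : ι, (c i % n.factorial) • w i := rfl
    _ = ∑ i : ι, c i • w i := Finset.sum_congr rfl fun i _ => (hsmul (c i) (w i)).symm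
    _ = u ^ k := hc.symm
  have hcardF : F.card ≤ Λ := by
    calc F.card ≤ (Finset.univ : Finset (ι → Fin n.factorial)).card := Finset.card_image_le
    _ = Λ := by
        rw [Finset.card_univ, Fintype.card_fun, hΛ]
        congr 1
        · exact Fintype.card_fin _
        · simp [ι, Fintype.card_fun]
  have hmaps : ∀ k ∈ Finset.range (Λ + 1), u ^ (k + 1) ∈ F := fun k _ => hmemF (k + 1)
  have hlt : F.card < (Finset.range (Λ + 1)).card := by
    rw [Finset.card_range]
    omega
  obtain ⟨x, hx, y, hy, hxy, hfxy⟩ := Finset.exists_ne_map_eq_of_card_lt_of_maps_to hlt hmaps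
  rw [Finset.mem_range] at hx hy
  have conclude : ∀ x y : ℕ, x < y → y ≤ Λ → u ^ (x + 1) = u ^ (y + 1) →
      u ^ (L + Λ) = u ^ Λ := by
    intro x y hxy' hyΛ heq
    set i0 := x + 1 with hi0
    set d := y - x with hd
    have hdL : d ∣ L := by
      have := Finset.dvd_lcm (f := (id : ℕ → ℕ)) (Finset.mem_Icc.mpr ⟨by omega, by omega⟩ : d ∈ Finset.Icc 1 Λ)
      simpa using this
    have hui : u ^ (i0 + d) = u ^ i0 := by
      have h5 : i0 + d = y + 1 := by omega
      rw [h5]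
      exact heq.symm
    have hper : ∀ k : ℕ, u ^ (i0 + d * k) = u ^ i0 := by
      intro k
      induction k with
      | zero => simp
      | succ k ihk =>
        have h6 : i0 + d * (k + 1) = (i0 + d * k) + d := by ring
        rw [h6, pow_add, ihk, ← pow_add, hui]
    obtain ⟨c, hc⟩ := hdL
    have h7 : L + Λ = (Λ - i0) + (i0 + d * c) := by
      rw [hc] at hLdef ⊢
      omega
    rw [h7, pow_add, hper c, ← pow_add]
    congr 1
    omega
  rcases Nat.lt_or_ge x y with h | h
  · exact conclude x y h (by omega) hfxy
  · exact conclude y x (by omega) (by omega) hfxy.symm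

end Stmt6Aux

theorem stmt_6 (R : Type*) [CommRing R] (n : ℕ)
    (hn : n = sInf {m : ℕ | ∃ p : Polynomial R,
        p.degree < (m : WithBot ℕ) ∧ ∀ x : R, p.eval x = x ^ m})
    (hfin : ∃ p : Polynomial R,
        p.degree < (n : WithBot ℕ) ∧ ∀ x : R, p.eval x = x ^ n) :
    (∀ u : R,
        u ^ ((Finset.Icc 1 (n.factorial ^ ((2 * n) ^ n * n))).lcm id
              + n.factorial ^ ((2 * n) ^ n * n))
          = u ^ (n.factorial ^ ((2 * n) ^ n * n))) ∧
    sInf {m : ℕ | ∃ p : Polynomial R,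
        (∀ i, p.coeff i ∈ (⊥ : Subring R)) ∧
        p.degree < (m : WithBot ℕ) ∧ ∀ x : R, p.eval x = x ^ m}
      ≤ (Finset.Icc 1 (n.factorial ^ ((2 * n) ^ n * n))).lcm id
          + n.factorial ^ ((2 * n) ^ n * n) := by
  obtain ⟨p, hdeg, hp⟩ := hfin
  rcases Nat.eq_zero_or_pos n with hn0 | hn1
  · subst hn0
    have hpbot : p.degree = ⊥ := by
      refine Nat.WithBot.lt_zero_iff.mp ?_
      simpa using hdeg
    have hp0 : p = 0 := Polynomial.degree_eq_bot.mp hpbot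
    have h01 : (0 : R) = 1 := by
      have h := hp 0
      rw [hp0] at h
      simpa using h
    haveI : Subsingleton R := subsingleton_of_zero_eq_one h01
    constructor
    · intro u
      exact Subsingleton.elim _ _
    · apply Nat.sInf_le
      refine ⟨0, fun i => by rw [Polynomial.coeff_zero]; exact zero_mem _, ?_,
        fun x => Subsingleton.elim _ _⟩
      rw [Polynomial.degree_zero]
      exact lt_of_lt_of_le (WithBot.bot_lt_coe 0) (by exact_mod_cast Nat.zero_le _)
  · have hmain := Stmt6Aux.part1 hn1 p hdeg hp
    refine ⟨hmain, ?_⟩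
    apply Nat.sInf_le
    have hΛ1 : 1 ≤ n.factorial ^ ((2 * n) ^ n * n) :=
      Nat.one_le_iff_ne_zero.mpr (pow_ne_zero _ (Nat.factorial_ne_zero n))
    have hL1 : 1 ≤ (Finset.Icc 1 (n.factorial ^ ((2 * n) ^ n * n))).lcm id := by
      rcases Nat.eq_zero_or_pos ((Finset.Icc 1 (n.factorial ^ ((2 * n) ^ n * n))).lcm id)
        with h0 | h
      · exfalso
        obtain ⟨z, hz, hz0⟩ := Finset.lcm_eq_zero_iff.mp h0
        rw [Finset.mem_Icc] at hz
        simp only [id_eq] at hz0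
        omega
      · exact h
    refine ⟨Polynomial.X ^ (n.factorial ^ ((2 * n) ^ n * n)), ?_, ?_, ?_⟩
    · intro i
      rw [Polynomial.coeff_X_pow]
      split
      · exact one_mem _
      · exact zero_mem _
    · refine lt_of_le_of_lt (Polynomial.degree_X_pow_le _) ?_
      exact_mod_cast (by omega :
        n.factorial ^ ((2 * n) ^ n * n) <
          (Finset.Icc 1 (n.factorial ^ ((2 * n) ^ n * n))).lcm id
            + n.factorial ^ ((2 * n) ^ n * n))
    · intro x
      rw [Polynomial.eval_pow, Polynomial.eval_X]
      exact (hmain x).symm
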